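/- Let F be a finite field, K = F[M] a matrix field (every nonzero element of K ⊆ F^{t×t} is invertible), and let P = (X | Y) and Q = (X' | Y') be t×2t matrices with blocks X, Y, X', Y' ∈ K. Then P ≠ Q if and only if the i-th rows of P and Q differ, for any fixed i ∈ {1, …, t}. -/

import Mathlib

lemma zero_row_of_mem {F : Type*} [Field F] {t : ℕ}
    {K : Subring (Matrix (Fin t) (Fin t) F)}
    (hK : ∀ A ∈ K, A ≠ 0 → IsUnit A)
    {A : Matrix (Fin t) (Fin t) F} (hA : A ∈ K) (i : Fin t)
    (h : ∀ j, A i j = 0) : A = 0 := by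
  by_contra hne
  obtain ⟨u, hu⟩ := hK A hA hne
  have h1 : A * (↑u⁻¹ : Matrix (Fin t) (Fin t) F) = 1 := by
    rw [← hu]; exact u.mul_inv
  have : (1 : Matrix (Fin t) (Fin t) F) i i = 0 := by
    rw [← h1, Matrix.mul_apply]
    simp [h]
  simp at this

theorem row_rigidity (F : Type*) [Field F] (t : ℕ)
    (K : Subring (Matrix (Fin t) (Fin t) F))
    (hK : ∀ A ∈ K, A ≠ 0 → IsUnit A)
    (X Y X' Y' : Matrix (Fin t) (Fin t) F)
    (hX : X ∈ K) (hY : Y ∈ K) (hX' : X' ∈ K) (hY' : Y' ∈ K)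
    (i : Fin t) :
    Matrix.fromCols X Y ≠ Matrix.fromCols X' Y' ↔
      (fun j => Matrix.fromCols X Y i j) ≠ (fun j => Matrix.fromCols X' Y' i j) := by
  constructor
  · intro hne
    intro hrow
    apply hne
    have hXrow : ∀ j, (X - X') i j = 0 := by
      intro j
      have := congrFun hrow (Sum.inl j)
      simp [Matrix.fromCols] at this
      simp [Matrix.sub_apply, this]
    have hYrow : ∀ j, (Y - Y') i j = 0 := by
      intro j
      have := congrFun hrow (Sum.inr j)
      simp [Matrix.fromCols] at this
      simp [Matrix.sub_apply, this]
    have hXeq : X = X' :=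
      sub_eq_zero.mp (zero_row_of_mem hK (sub_mem hX hX') i hXrow)
    have hYeq : Y = Y' :=
      sub_eq_zero.mp (zero_row_of_mem hK (sub_mem hY hY') i hYrow)
    rw [hXeq, hYeq]
  · intro hrow hne
    exact hrow (by rw [hne])
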